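/- arXiv:1404.6945 — 5 statements merged into one kernel-verified Lean document; each statement's English description precedes it below -/
import Mathlib

section
/- Let γ_B ≥ 0 and Γ_M > 0 be real numbers, and define the maximal achievable downlink rate under joint decoding as the function R_B : [0,∞) → ℝ given by R_B(γ₁) = C(γ_B/(1+γ₁)) if γ₁ < Γ_M, and R_B(γ₁) = max{ C(γ_B/(1+γ₁)), min{ C(γ_B), C(γ₁+γ_B) − C(Γ_M) } } if γ₁ ≥ Γ_M. Then the infimum of R_B(γ₁) over all γ₁ ≥ 0 equals C(γ_B/(1+Γ_M)), and this infimum is attained at γ₁ = Γ_M. -/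
/-- Shannon capacity function `C(x) = log₂(1+x)`. -/
noncomputable def C (x : ℝ) : ℝ := Real.logb 2 (1 + x)

lemma Cmono {x y : ℝ} (hx : 0 ≤ x) (hxy : x ≤ y) : C x ≤ C y := by
  unfold C
  apply Real.logb_le_logb_of_le one_lt_two (by linarith)
  linarith

lemma Ckey {γB ΓM : ℝ} (hγB : 0 ≤ γB) (hΓM : 0 < ΓM) :
    C (ΓM + γB) - C ΓM = C (γB / (1 + ΓM)) := by
  unfold C
  rw [show (1:ℝ) + γB / (1 + ΓM) = (1 + (ΓM + γB)) / (1 + ΓM) by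
    field_simp; ring]
  rw [Real.logb_div (by linarith) (by linarith)]

/-- For `γ_B ≥ 0`, `Γ_M > 0`, the maximal achievable downlink rate under joint decoding
`R_B(γ₁)` (treating the MTD as noise when `γ₁ < Γ_M`, using the MAC region otherwise)
has infimum over `γ₁ ≥ 0` equal to `C(γ_B/(1+Γ_M))`, attained at `γ₁ = Γ_M`. -/
theorem stmt_0 (γB ΓM : ℝ) (hγB : 0 ≤ γB) (hΓM : 0 < ΓM)
    (RB : ℝ → ℝ)
    (hRB : ∀ γ₁, 0 ≤ γ₁ →
      RB γ₁ = if γ₁ < ΓM then C (γB / (1 + γ₁))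
        else max (C (γB / (1 + γ₁))) (min (C γB) (C (γ₁ + γB) - C ΓM))) :
    IsLeast (RB '' {γ₁ : ℝ | 0 ≤ γ₁}) (C (γB / (1 + ΓM))) ∧
      RB ΓM = C (γB / (1 + ΓM)) := by
  have hval : RB ΓM = C (γB / (1 + ΓM)) := by
    rw [hRB ΓM hΓM.le, if_neg (lt_irrefl ΓM), Ckey hγB hΓM]
    have h1 : C (γB / (1 + ΓM)) ≤ C γB :=
      Cmono (by positivity) (div_le_self hγB (by linarith))
    rw [min_eq_right h1, max_self]
  refine ⟨⟨⟨ΓM, hΓM.le, hval⟩, ?_⟩, hval⟩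
  rintro r ⟨γ₁, hγ₁, rfl⟩
  simp only [Set.mem_setOf_eq] at hγ₁
  rw [hRB γ₁ hγ₁]
  split_ifs with h
  · apply Cmono (by positivity)
    apply div_le_div_of_nonneg_left hγB (by linarith) (by linarith)
  · push_neg at h
    refine le_max_of_le_right (le_min ?_ ?_)
    · exact Cmono (by positivity) (div_le_self hγB (by linarith))
    · rw [← Ckey hγB hΓM]
      have := Cmono (x := ΓM + γB) (y := γ₁ + γB) (by linarith) (by linarith)
      linarith
end

section
/- Let γ_B ≥ 0 and Γ_M > 0 be real numbers. For every γ₁ ≥ Γ_M, one has max{ C(γ_B/(1+γ₁)), min{ C(γ_B), C(γ₁+γ_B) − C(Γ_M) } } = min{ C(γ_B), C(γ₁+γ_B) − C(Γ_M) }; that is, when the interferer's SNR is at least Γ_M, joint decoding is never worse than treating the interfering signal as noise. -/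
/-- For `γ_B ≥ 0`, `Γ_M > 0` and every `γ₁ ≥ Γ_M`, joint decoding is never worse than
treating the interfering signal as noise:
`max{C(γ_B/(1+γ₁)), min{C(γ_B), C(γ₁+γ_B) − C(Γ_M)}} = min{C(γ_B), C(γ₁+γ_B) − C(Γ_M)}`. -/
theorem stmt_3 (γB ΓM : ℝ) (hγB : 0 ≤ γB) (hΓM : 0 < ΓM) :
    ∀ γ₁ : ℝ, ΓM ≤ γ₁ →
      max (C (γB / (1 + γ₁))) (min (C γB) (C (γ₁ + γB) - C ΓM)) =
        min (C γB) (C (γ₁ + γB) - C ΓM) := by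
  intro γ₁ hγ₁
  have hγ₁pos : 0 < γ₁ := lt_of_lt_of_le hΓM hγ₁
  have h1γ₁ : (0:ℝ) < 1 + γ₁ := by linarith
  apply max_eq_right
  refine le_min ?_ ?_
  · -- C(γB/(1+γ₁)) ≤ C γB
    unfold C
    have h : γB / (1 + γ₁) ≤ γB := by
      rw [div_le_iff₀ h1γ₁]
      nlinarith
    gcongr
    exact one_lt_two
  · -- C(γB/(1+γ₁)) ≤ C(γ₁+γB) - C ΓM
    have key : C (γB / (1 + γ₁)) = C (γ₁ + γB) - C γ₁ := by
      unfold C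
      rw [← Real.logb_div (by positivity) (by positivity)]
      congr 1
      field_simp
      ring
    have hmono : C ΓM ≤ C γ₁ := by
      unfold C
      gcongr
      exact one_lt_two
    rw [key]
    linarith
end

section
/- Let N ≥ 1 be a natural number, γ_B ≥ 0 and Γ_M > 0 real numbers, and γ : Fin N → [0,∞) a vector of SNRs. For every nonempty subset S of Fin N satisfying the multiple-access decodability inequality 1 + Σ_{i∈S} γ_i ≥ (1+Γ_M)^{|S|}, it holds that (1 + γ_B + Σ_{i∈S} γ_i)/(1+Γ_M)^{|S|} ≥ 1 + γ_B/(1+Γ_M)^{N}. Equivalently, C(γ_B + Σ_{i∈S} γ_i) − |S|·C(Γ_M) ≥ C(γ_B/(1+Γ_M)^{N}). -/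
/-- Achievability step: for `N ≥ 1`, `γ_B ≥ 0`, `Γ_M > 0` and nonnegative SNRs
`γ : Fin N → ℝ`, every nonempty subset `S` satisfying the MAC decodability inequality
`1 + Σ_{i∈S} γ_i ≥ (1+Γ_M)^{|S|}` obeys
`(1 + γ_B + Σ_{i∈S} γ_i)/(1+Γ_M)^{|S|} ≥ 1 + γ_B/(1+Γ_M)^N`, equivalently
`C(γ_B + Σ_{i∈S} γ_i) − |S|·C(Γ_M) ≥ C(γ_B/(1+Γ_M)^N)`. -/
theorem stmt_4 (N : ℕ) (hN : 1 ≤ N) (γB ΓM : ℝ) (hγB : 0 ≤ γB) (hΓM : 0 < ΓM)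
    (γ : Fin N → ℝ) (hγ : ∀ i, 0 ≤ γ i) :
    ∀ S : Finset (Fin N), S.Nonempty →
      1 + ∑ i ∈ S, γ i ≥ (1 + ΓM) ^ S.card →
      (1 + γB + ∑ i ∈ S, γ i) / (1 + ΓM) ^ S.card ≥ 1 + γB / (1 + ΓM) ^ N ∧
      C (γB + ∑ i ∈ S, γ i) - (S.card : ℝ) * C ΓM ≥ C (γB / (1 + ΓM) ^ N) := by
  intro S hS hmac
  have h1 : (1:ℝ) < 1 + ΓM := by linarith
  set Sg := ∑ i ∈ S, γ i with hSgdef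
  have hSg0 : 0 ≤ Sg := Finset.sum_nonneg fun i _ => hγ i
  have hPk : (0:ℝ) < (1 + ΓM) ^ S.card := pow_pos (by linarith) _
  have hPN : (0:ℝ) < (1 + ΓM) ^ N := pow_pos (by linarith) _
  have hcard : S.card ≤ N := by simpa using S.card_le_univ.trans_eq (by simp)
  have hpowle : (1 + ΓM) ^ S.card ≤ (1 + ΓM) ^ N :=
    pow_le_pow_right₀ (le_of_lt h1) hcard
  have key : (1 + γB + Sg) / (1 + ΓM) ^ S.card ≥ 1 + γB / (1 + ΓM) ^ N := by
    have h2 : γB / (1 + ΓM) ^ N ≤ γB / (1 + ΓM) ^ S.card :=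
      div_le_div_of_nonneg_left hγB hPk hpowle
    have h3 : (1 + Sg) / (1 + ΓM) ^ S.card ≥ 1 := (one_le_div hPk).mpr hmac
    have heq : (1 + γB + Sg) / (1 + ΓM) ^ S.card
        = (1 + Sg) / (1 + ΓM) ^ S.card + γB / (1 + ΓM) ^ S.card := by
      ring
    rw [ge_iff_le, heq]
    linarith
  refine ⟨key, ?_⟩
  have hb2 : (1:ℝ) < 2 := one_lt_two
  have hx : 0 < 1 + (γB + Sg) := by linarith
  have hy : 0 < 1 + γB / (1 + ΓM) ^ N := by positivity
  unfold C
  have hlog : Real.logb 2 (1 + (γB + Sg)) - (S.card : ℝ) * Real.logb 2 (1 + ΓM)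
      = Real.logb 2 ((1 + γB + Sg) / (1 + ΓM) ^ S.card) := by
    rw [Real.logb_div (by linarith) (ne_of_gt hPk), Real.logb_pow]
    ring_nf
  rw [hlog]
  rw [ge_iff_le]
  gcongr
end

section
/- Let Γ_M > 0, let S be a finite set, let γ : S → [0,∞), and let T be a proper subset of S. Suppose that 1 + Σ_{i∈S} γ_i < (1+Γ_M)^{|S|} (the decodability inequality fails for S) while 1 + Σ_{i∈T} γ_i ≥ (1+Γ_M)^{|T|} (it holds for T). Then 1 + (Σ_{i∈S∖T} γ_i)/(1 + Σ_{i∈T} γ_i) < (1+Γ_M)^{|S|−|T|}; that is, the devices in S∖T are not jointly decodable even after the signals of the devices in T are treated as noise. -/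
/-- Analytic core of the minimal-undecodable-subset lemma: if the MAC decodability
inequality fails for a finite set `S` of devices but holds for a proper subset `T ⊊ S`,
then the devices in `S∖T` are not jointly decodable after the signals of `T` are treated
as noise: `1 + (Σ_{i∈S∖T} γ_i)/(1 + Σ_{i∈T} γ_i) < (1+Γ_M)^{|S|−|T|}`. -/
theorem stmt_9 {ι : Type*} [DecidableEq ι] (ΓM : ℝ) (hΓM : 0 < ΓM)
    (S T : Finset ι) (γ : ι → ℝ) (hγ : ∀ i ∈ S, 0 ≤ γ i) (hTS : T ⊂ S)
    (hS : 1 + ∑ i ∈ S, γ i < (1 + ΓM) ^ S.card)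
    (hT : 1 + ∑ i ∈ T, γ i ≥ (1 + ΓM) ^ T.card) :
    1 + (∑ i ∈ S \ T, γ i) / (1 + ∑ i ∈ T, γ i) < (1 + ΓM) ^ (S.card - T.card) := by
  set A := 1 + ∑ i ∈ T, γ i with hA
  set D := ∑ i ∈ S \ T, γ i with hD
  have hone : (1:ℝ) ≤ (1 + ΓM) ^ T.card := one_le_pow₀ (by linarith)
  have hApos : 0 < A := lt_of_lt_of_le one_pos (le_trans hone hT)
  have hsplit : ∑ i ∈ S, γ i = ∑ i ∈ T, γ i + D := by
    rw [hD, ← Finset.sum_union (Finset.disjoint_sdiff),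
      Finset.union_sdiff_of_subset hTS.subset]
  have hAD : A + D < (1 + ΓM) ^ S.card := by rw [hA]; linarith [hS, hsplit]
  have hcard : T.card ≤ S.card := Finset.card_le_card hTS.subset
  have hkey : 1 + D / A = (A + D) / A := by field_simp
  rw [hkey, div_lt_iff₀ hApos]
  calc A + D < (1 + ΓM) ^ S.card := hAD
    _ = (1 + ΓM) ^ (S.card - T.card) * (1 + ΓM) ^ T.card := by
        rw [← pow_add, Nat.sub_add_cancel hcard]
    _ ≤ (1 + ΓM) ^ (S.card - T.card) * A := by
        have : (0:ℝ) < (1 + ΓM) ^ (S.card - T.card) :=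
          pow_pos (by linarith) _
        exact mul_le_mul_of_nonneg_left hT this.le
end

section
/- Let γ_B > 0 and Γ_M > 0 be real numbers, and define the maximal achievable downlink rate under single-user decoding with successive interference cancellation as R_B^{SD} : [0,∞) → ℝ given by R_B^{SD}(γ₁) = C(γ_B/(1+γ₁)) if γ₁ < Γ_M·(1+γ_B), and R_B^{SD}(γ₁) = C(γ_B) if γ₁ ≥ Γ_M·(1+γ_B). Then the infimum of R_B^{SD}(γ₁) over all γ₁ ≥ 0 equals C(γ_B/(1+Γ_M·(1+γ_B))), this infimum is not attained (R_B^{SD}(γ₁) > C(γ_B/(1+Γ_M·(1+γ_B))) for every γ₁ ≥ 0), and it is the supremum of the set of downlink rates decodable for every value of γ₁ ≥ 0. -/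
/-- For `γ_B > 0`, `Γ_M > 0`, the maximal achievable downlink rate under single-user
decoding with successive interference cancellation `R_B^{SD}(γ₁)` has infimum over
`γ₁ ≥ 0` equal to `C(γ_B/(1+Γ_M(1+γ_B)))`; the infimum is not attained (the value is
strictly exceeded for every `γ₁ ≥ 0`), and it is the supremum of the set of downlink
rates decodable for every value of `γ₁ ≥ 0`. -/
theorem stmt_10 (γB ΓM : ℝ) (hγB : 0 < γB) (hΓM : 0 < ΓM)
    (RBSD : ℝ → ℝ)
    (hRBSD : ∀ γ₁, 0 ≤ γ₁ →
      RBSD γ₁ = if γ₁ < ΓM * (1 + γB) then C (γB / (1 + γ₁)) else C γB) :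
    IsGLB (RBSD '' {γ₁ : ℝ | 0 ≤ γ₁}) (C (γB / (1 + ΓM * (1 + γB)))) ∧
    (∀ γ₁, 0 ≤ γ₁ → RBSD γ₁ > C (γB / (1 + ΓM * (1 + γB)))) ∧
    IsLUB {r : ℝ | ∀ γ₁, 0 ≤ γ₁ → r ≤ RBSD γ₁} (C (γB / (1 + ΓM * (1 + γB)))) := by
  have hT : 0 < ΓM * (1 + γB) := mul_pos hΓM (by linarith)
  set T := ΓM * (1 + γB) with hTdef
  set L := C (γB / (1 + T)) with hLdef
  have hstrict : ∀ γ₁, 0 ≤ γ₁ → RBSD γ₁ > L := by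
    intro γ₁ hγ₁
    rw [hRBSD γ₁ hγ₁]
    have hpos : 0 < γB / (1 + T) := div_pos hγB (by linarith)
    by_cases h : γ₁ < T
    · rw [if_pos h]
      apply Real.logb_lt_logb one_lt_two (by linarith)
      have : γB / (1 + T) < γB / (1 + γ₁) :=
        div_lt_div_of_pos_left hγB (by linarith) (by linarith)
      linarith
    · rw [if_neg h]
      apply Real.logb_lt_logb one_lt_two (by linarith)
      have : γB / (1 + T) < γB := by
        rw [div_lt_iff₀ (by linarith)]
        nlinarith
      linarith
  have hglb : IsGLB (RBSD '' {γ₁ : ℝ | 0 ≤ γ₁}) L := by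
    constructor
    · rintro y ⟨γ₁, hγ₁, rfl⟩
      exact le_of_lt (hstrict γ₁ hγ₁)
    · intro b hb
      have hbf : ∀ x ∈ Set.Ico (0:ℝ) T, b ≤ C (γB / (1 + x)) := by
        rintro x ⟨hx0, hxT⟩
        have hbx := hb ⟨x, hx0, rfl⟩
        rwa [hRBSD x hx0, if_pos hxT] at hbx
      have hcont : ContinuousAt (fun x : ℝ => C (γB / (1 + x))) T := by
        have h1 : ContinuousAt (fun x : ℝ => 1 + γB / (1 + x)) T := by
          apply ContinuousAt.add continuousAt_const
          exact ContinuousAt.div continuousAt_const (by fun_prop) (by linarith)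
        have h2 : (1 : ℝ) + γB / (1 + T) ≠ 0 := by
          have : 0 < γB / (1 + T) := div_pos hγB (by linarith)
          linarith
        simp only [C, Real.logb]
        exact (ContinuousAt.log h1 h2).div_const _
      haveI hne : (nhdsWithin T (Set.Ico 0 T)).NeBot := by
        rw [← mem_closure_iff_nhdsWithin_neBot, closure_Ico hT.ne]
        exact ⟨le_of_lt hT, le_refl T⟩
      have htend : Filter.Tendsto (fun x : ℝ => C (γB / (1 + x)))
          (nhdsWithin T (Set.Ico 0 T)) (nhds L) :=
        hcont.continuousWithinAt
      exact ge_of_tendsto htend (Filter.eventually_of_mem self_mem_nhdsWithin hbf)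
  refine ⟨hglb, hstrict, ?_, ?_⟩
  · intro r hr
    refine hglb.2 ?_
    rintro y ⟨γ₁, hγ₁, rfl⟩
    exact hr γ₁ hγ₁
  · intro b hb
    exact hb (fun γ₁ hγ₁ => le_of_lt (hstrict γ₁ hγ₁))
end
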